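/- Let N ≥ 5 and h_Q(m) = ((m + N - 3)·…·(m+1)/(N-2)!)·(2m + N - 2). For integers 0 < s < t ≤ m/2, one has h_Q(t) + h_Q(m - t) < h_Q(s) + h_Q(m - s). -/

import Mathlib

open Polynomial Finset

-- monomial inequality: if a < a' ≤ b' < b, a+b = a'+b', all nonneg, then a'^k+b'^k ≤ a^k+b^k
lemma aux_pow_le {a a' b b' : ℚ} (ha : 0 ≤ a) (h1 : a < a') (h2 : a' ≤ b') (h3 : b' < b)
    (hsum : a + b = a' + b') (k : ℕ) : a' ^ k + b' ^ k ≤ a ^ k + b ^ k := by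
  have e1 : (∑ i ∈ range k, b ^ i * b' ^ (k - 1 - i)) * (b - b') = b ^ k - b' ^ k :=
    geom_sum₂_mul b b' k
  have e2 : (∑ i ∈ range k, a' ^ i * a ^ (k - 1 - i)) * (a' - a) = a' ^ k - a ^ k :=
    geom_sum₂_mul a' a k
  have hd : b - b' = a' - a := by linarith
  have hSle : (∑ i ∈ range k, a' ^ i * a ^ (k - 1 - i)) ≤
      ∑ i ∈ range k, b ^ i * b' ^ (k - 1 - i) := by
    refine Finset.sum_le_sum fun i _ => ?_
    have : a' ≤ b := by linarith
    exact mul_le_mul (pow_le_pow_left₀ (by linarith) this i)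
      (pow_le_pow_left₀ ha (by linarith) _) (pow_nonneg ha _) (pow_nonneg (by linarith) _)
  have hpos : 0 < a' - a := by linarith
  have key : a' ^ k - a ^ k ≤ b ^ k - b' ^ k := by
    rw [← e1, ← e2, hd]
    exact mul_le_mul_of_nonneg_right hSle hpos.le
  linarith

lemma aux_pow_lt {a a' b b' : ℚ} (ha : 0 ≤ a) (h1 : a < a') (h2 : a' ≤ b') (h3 : b' < b)
    (hsum : a + b = a' + b') {k : ℕ} (hk : 2 ≤ k) : a' ^ k + b' ^ k < a ^ k + b ^ k := by
  have e1 : (∑ i ∈ range k, b ^ i * b' ^ (k - 1 - i)) * (b - b') = b ^ k - b' ^ k :=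
    geom_sum₂_mul b b' k
  have e2 : (∑ i ∈ range k, a' ^ i * a ^ (k - 1 - i)) * (a' - a) = a' ^ k - a ^ k :=
    geom_sum₂_mul a' a k
  have hd : b - b' = a' - a := by linarith
  have ha' : 0 ≤ a' := by linarith
  have hSlt : (∑ i ∈ range k, a' ^ i * a ^ (k - 1 - i)) <
      ∑ i ∈ range k, b ^ i * b' ^ (k - 1 - i) := by
    refine Finset.sum_lt_sum (fun i _ => ?_) ⟨k - 1, Finset.mem_range.2 (by omega), ?_⟩
    · have : a' ≤ b := by linarith
      exact mul_le_mul (pow_le_pow_left₀ ha' this i)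
        (pow_le_pow_left₀ ha (by linarith) _) (pow_nonneg ha _) (pow_nonneg (by linarith) _)
    · have hexp : k - 1 - (k - 1) = 0 := by omega
      rw [hexp, pow_zero, pow_zero, mul_one, mul_one]
      exact pow_lt_pow_left₀ (by linarith) ha' (by omega)
  have hpos : 0 < a' - a := by linarith
  have key : a' ^ k - a ^ k < b ^ k - b' ^ k := by
    rw [← e1, ← e2, hd]
    exact mul_lt_mul_of_pos_right hSlt hpos
  linarith

theorem hilbert_function_convexity (N : ℕ) (hN : 5 ≤ N)
    (hQ : ℤ → ℚ)
    (hdef : ∀ m : ℤ, hQ m =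
      ((∏ j ∈ Finset.range (N - 3), ((m : ℚ) + j + 1)) / (N - 2).factorial) *
        (2 * m + N - 2))
    (s t m : ℤ) (hs : 0 < s) (hst : s < t) (htm : 2 * t ≤ m) :
    hQ t + hQ (m - t) < hQ s + hQ (m - s) := by
  set Q : Polynomial ℚ := ∏ j ∈ range (N - 3), (X + C ((j : ℚ) + 1)) with hQdef
  set L : Polynomial ℚ := C 2 * X + C ((N : ℚ) - 2) with hLdef
  set P : Polynomial ℚ := Q * L with hPdef
  -- hQ in terms of P
  have hNQ : (2 : ℚ) ≤ (N : ℚ) := by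
    have : (5 : ℚ) ≤ (N : ℚ) := by exact_mod_cast hN
    linarith
  have hevalP : ∀ x : ℚ, P.eval x = (∏ j ∈ range (N - 3), (x + j + 1)) * (2 * x + N - 2) := by
    intro x
    simp only [hPdef, hQdef, hLdef, eval_mul, eval_prod, eval_add, eval_X, eval_C, eval_mul]
    ring_nf
  have hfact : (0 : ℚ) < (N - 2).factorial := by exact_mod_cast (N - 2).factorial_pos
  have hhQ : ∀ x : ℤ, hQ x = P.eval (x : ℚ) / (N - 2).factorial := by
    intro x
    rw [hdef x, hevalP]
    ring
  -- coefficients of P are nonneg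
  have hXC : ∀ c : ℚ, 0 ≤ c → ∀ n, 0 ≤ (X + C c).coeff n := by
    intro c hc n
    rw [coeff_add, coeff_X, coeff_C]
    split_ifs <;> linarith
  have hcoeffQ : ∀ n, 0 ≤ Q.coeff n := by
    rw [hQdef]
    induction (range (N - 3)) using Finset.cons_induction with
    | empty => intro n; rcases n with _ | n <;> simp [Polynomial.coeff_one]
    | cons j sfin hj ih =>
        intro n
        rw [Finset.prod_cons, Polynomial.coeff_mul]
        exact Finset.sum_nonneg fun x _ =>
          mul_nonneg (hXC _ (by positivity) _) (ih _)
  have hcoeffL : ∀ n, 0 ≤ L.coeff n := by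
    intro n
    rw [hLdef, coeff_add, coeff_C_mul, coeff_X, coeff_C]
    split_ifs <;> simp <;> linarith
  have hcoeffP : ∀ n, 0 ≤ P.coeff n := by
    intro n
    rw [hPdef, Polynomial.coeff_mul]
    exact Finset.sum_nonneg fun x _ => mul_nonneg (hcoeffQ _) (hcoeffL _)
  -- degrees
  have hmonQ : Q.Monic := monic_prod_of_monic _ _ fun j _ => monic_X_add_C _
  have hdegQ : Q.natDegree = N - 3 := by
    rw [hQdef, natDegree_prod_of_monic _ _ fun j _ => monic_X_add_C _,
      Finset.sum_congr rfl (fun j _ => natDegree_X_add_C _), Finset.sum_const,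
      smul_eq_mul, mul_one, Finset.card_range]
  have hdegL : L.natDegree = 1 := by
    rw [hLdef]; exact natDegree_linear (by norm_num)
  have hleadL : L.leadingCoeff = 2 := by
    rw [hLdef]; rw [leadingCoeff_linear (by norm_num : (2:ℚ) ≠ 0)]
  have hdegP : P.natDegree = N - 2 := by
    rw [hPdef, natDegree_mul hmonQ.ne_zero, hdegQ, hdegL]
    · omega
    · intro h; rw [h] at hdegL; simp at hdegL
  have hcoeff2 : P.coeff (N - 2) = 2 := by
    have : P.coeff (Q.natDegree + L.natDegree) = Q.leadingCoeff * L.leadingCoeff :=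
      coeff_mul_degree_add_degree Q L
    rw [hdegQ, hdegL, hmonQ.leadingCoeff, hleadL, one_mul] at this
    rwa [show N - 3 + 1 = N - 2 by omega] at this
  -- reduce to polynomial inequality
  rw [hhQ t, hhQ (m - t), hhQ s, hhQ (m - s)]
  rw [← add_div, ← add_div, div_lt_div_iff_of_pos_right hfact]
  push_cast
  -- set up variables
  have ha : (0 : ℚ) ≤ (s : ℚ) := by exact_mod_cast hs.le
  have h1 : (s : ℚ) < (t : ℚ) := by exact_mod_cast hst
  have h2 : (t : ℚ) ≤ (m : ℚ) - t := by
    have : (2 : ℚ) * t ≤ m := by exact_mod_cast htm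
    linarith
  have h3 : (m : ℚ) - t < (m : ℚ) - s := by linarith
  have hsum : (s : ℚ) + ((m : ℚ) - s) = (t : ℚ) + ((m : ℚ) - t) := by ring
  -- expand evals as sums
  have hev : ∀ x : ℚ, P.eval x = ∑ k ∈ range (N - 1), P.coeff k * x ^ k := by
    intro x
    exact eval_eq_sum_range' (by rw [hdegP]; omega) x
  rw [hev, hev, hev, hev, ← Finset.sum_add_distrib, ← Finset.sum_add_distrib]
  refine Finset.sum_lt_sum (fun k _ => ?_) ⟨N - 2, Finset.mem_range.2 (by omega), ?_⟩
  · have h := mul_le_mul_of_nonneg_left (aux_pow_le ha h1 h2 h3 hsum k) (hcoeffP k)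
    rw [mul_add, mul_add] at h
    exact h
  · have hc : (0 : ℚ) < P.coeff (N - 2) := by rw [hcoeff2]; norm_num
    have h := mul_lt_mul_of_pos_left (aux_pow_lt ha h1 h2 h3 hsum (by omega : 2 ≤ N - 2)) hc
    rw [mul_add, mul_add] at h
    exact h
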